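/- Let A be an n×n real symmetric matrix with nonnegative entries that is irreducible, meaning that for every pair of indices u, v there exists a positive integer r with (A^r)(u,v) > 0. Let Q be an n×m real matrix (m ≥ 1) with nonnegative entries such that Qᵀ Q = I_m, every row of Q is nonzero, and A Q = Q B where B = Qᵀ A Q. Then the largest eigenvalue of A equals the largest eigenvalue of B, and this common value is a simple root of the characteristic polynomial of A and also a simple root of the characteristic polynomial of B. -/

import Mathlib

open Matrix Polynomial


variable {k : ℕ}

private lemma pow_entry_nonneg' (M : Matrix (Fin k) (Fin k) ℝ) (hnn : ∀ u v, 0 ≤ M u v) :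
    ∀ r u v, 0 ≤ (M ^ r) u v := by
  intro r
  induction r with
  | zero => intro u v; by_cases h : u = v <;> simp [pow_zero, Matrix.one_apply, h]
  | succ r ih =>
    intro u v
    rw [pow_succ, Matrix.mul_apply]
    exact Finset.sum_nonneg fun w _ => mul_nonneg (ih u w) (hnn w v)

private lemma root_of_eigenvector' (M : Matrix (Fin k) (Fin k) ℝ) (t : ℝ) (x : Fin k → ℝ)
    (hx : x ≠ 0) (h : M *ᵥ x = t • x) : t ∈ M.charpoly.roots := by
  rw [mem_roots']
  refine ⟨M.charpoly_monic.ne_zero, ?_⟩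
  have heval : M.charpoly.eval t = (Matrix.diagonal (fun _ => t) - M).det := by
    rw [Matrix.charpoly, ← Polynomial.coe_evalRingHom, RingHom.map_det]
    congr 1
    ext i j
    by_cases hij : i = j
    · subst hij; simp [charmatrix_apply_eq]
    · simp [charmatrix_apply_ne _ _ _ hij, Matrix.diagonal_apply_ne _ hij]
  rw [IsRoot.def, heval, ← Matrix.exists_mulVec_eq_zero_iff]
  refine ⟨x, hx, ?_⟩
  rw [Matrix.sub_mulVec, h]
  have : Matrix.diagonal (fun _ : Fin k => t) *ᵥ x = t • x := by
    ext i; simp [Matrix.mulVec_diagonal]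
  rw [this, sub_self]

private lemma charpoly_conj_aux' (U D V : Matrix (Fin k) (Fin k) ℝ) (hUV : U * V = 1)
    (hVU : V * U = 1) : (U * D * V).charpoly = D.charpoly := by
  have hcm : ∀ M : Matrix (Fin k) (Fin k) ℝ,
      charmatrix M = Matrix.diagonal (fun _ => (X : ℝ[X])) - M.map C := by
    intro M; ext i j
    by_cases h : i = j
    · subst h; simp [charmatrix_apply_eq]
    · simp [charmatrix_apply_ne _ _ _ h, Matrix.diagonal_apply_ne _ h]
  have key : charmatrix (U * D * V) = U.map C * charmatrix D * V.map C := by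
    rw [hcm, hcm]
    have hdiag : Matrix.diagonal (fun _ => (X : ℝ[X]))
        = (X : ℝ[X]) • (1 : Matrix (Fin k) (Fin k) ℝ[X]) := by
      rw [Matrix.smul_one_eq_diagonal]
    rw [Matrix.mul_sub, Matrix.sub_mul, hdiag]
    rw [Matrix.mul_smul, Matrix.mul_one, Matrix.smul_mul]
    have h1 : U.map (C : ℝ →+* ℝ[X]) * V.map C = 1 := by
      rw [← Matrix.map_mul, hUV, Matrix.map_one _ (map_zero C) (map_one C)]
    rw [h1]
    congr 1
    rw [← Matrix.map_mul, ← Matrix.map_mul]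
  rw [Matrix.charpoly, key, Matrix.det_mul, Matrix.det_mul, Matrix.charpoly]
  have : (U.map (C : ℝ →+* ℝ[X])).det * (V.map (C : ℝ →+* ℝ[X])).det = 1 := by
    rw [mul_comm, ← Matrix.det_mul, ← Matrix.map_mul, hVU,
      Matrix.map_one _ (map_zero C) (map_one C), Matrix.det_one]
  calc (U.map C).det * (charmatrix D).det * (V.map C).det
      = (charmatrix D).det * ((U.map (C : ℝ →+* ℝ[X])).det * (V.map (C : ℝ →+* ℝ[X])).det) := by
        ring
    _ = (charmatrix D).det := by rw [this, mul_one]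

private lemma roots_charpoly_symm' (M : Matrix (Fin k) (Fin k) ℝ) (hM : M.IsHermitian) :
    M.charpoly.roots = Finset.univ.val.map hM.eigenvalues := by
  have hU := Matrix.mem_unitaryGroup_iff.mp (hM.eigenvectorUnitary).2
  have hU' : star (hM.eigenvectorUnitary : Matrix (Fin k) (Fin k) ℝ)
      * (hM.eigenvectorUnitary : Matrix (Fin k) (Fin k) ℝ) = 1 :=
    Matrix.mem_unitaryGroup_iff'.mp (hM.eigenvectorUnitary).2
  have : M.charpoly = (Matrix.diagonal (RCLike.ofReal ∘ hM.eigenvalues)).charpoly := by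
    conv_lhs => rw [hM.spectral_theorem]
    exact charpoly_conj_aux' _ _ _ hU hU'
  rw [this, Matrix.charpoly_of_upperTriangular _ (Matrix.blockTriangular_diagonal _)]
  have hdg : ∀ i : Fin k,
      (Matrix.diagonal (RCLike.ofReal ∘ hM.eigenvalues) : Matrix (Fin k) (Fin k) ℝ) i i
        = hM.eigenvalues i := by intro i; simp
  simp_rw [hdg]
  rw [show (∏ i : Fin k, (X - C (hM.eigenvalues i)))
      = ((Finset.univ.val.map hM.eigenvalues).map (fun a : ℝ => X - C a)).prod by
    rw [Multiset.map_map]; rfl]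
  exact roots_multiset_prod_X_sub_C _

private lemma rayleigh_main' (M : Matrix (Fin k) (Fin k) ℝ) (hM : M.IsHermitian) (μ : ℝ)
    (hmax : ∀ i, hM.eigenvalues i ≤ μ) (z : Fin k → ℝ) :
    z ⬝ᵥ (M *ᵥ z) ≤ μ * (z ⬝ᵥ z) ∧
      (z ⬝ᵥ (M *ᵥ z) = μ * (z ⬝ᵥ z) → M *ᵥ z = μ • z) := by
  classical
  set U : Matrix (Fin k) (Fin k) ℝ := (hM.eigenvectorUnitary : Matrix (Fin k) (Fin k) ℝ)
    with hUdef
  have hUs : star U = Uᵀ := by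
    rw [Matrix.star_eq_conjTranspose, conjTranspose_eq_transpose_of_trivial]
  have hUU : U * Uᵀ = 1 := by
    rw [← hUs]; exact Matrix.mem_unitaryGroup_iff.mp (hM.eigenvectorUnitary).2
  set y : Fin k → ℝ := Uᵀ *ᵥ z with hy
  set lam := hM.eigenvalues with hlam
  have hDdiag : (Matrix.diagonal (RCLike.ofReal ∘ lam) : Matrix (Fin k) (Fin k) ℝ)
      = Matrix.diagonal lam := by congr 1
  have hMz : M *ᵥ z = U *ᵥ (Matrix.diagonal lam *ᵥ y) := by
    conv_lhs => rw [hM.spectral_theorem]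
    rw [Unitary.conjStarAlgAut_apply, ← hUdef, hUs, hDdiag, ← Matrix.mulVec_mulVec, ← Matrix.mulVec_mulVec]
  have hvm : vecMul z U = y := by rw [hy, Matrix.mulVec_transpose]
  have hquad : z ⬝ᵥ (M *ᵥ z) = ∑ i, lam i * (y i)^2 := by
    rw [hMz, Matrix.dotProduct_mulVec, hvm, dotProduct]
    congr 1; ext i
    rw [Matrix.mulVec_diagonal]; ring
  have h2 : U *ᵥ y = z := by
    rw [hy, Matrix.mulVec_mulVec, hUU, Matrix.one_mulVec]
  have hnorm : z ⬝ᵥ z = ∑ i, (y i)^2 := by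
    calc z ⬝ᵥ z = z ⬝ᵥ (U *ᵥ y) := by rw [h2]
      _ = (z ᵥ* U) ⬝ᵥ y := Matrix.dotProduct_mulVec _ _ _
      _ = y ⬝ᵥ y := by rw [hvm]
      _ = ∑ i, (y i)^2 := by
          rw [dotProduct]; apply Finset.sum_congr rfl; intro i _; ring
  constructor
  · rw [hquad, hnorm, Finset.mul_sum]
    apply Finset.sum_le_sum
    intro i _
    exact mul_le_mul_of_nonneg_right (hmax i) (sq_nonneg _)
  · intro heq
    have hsum : ∑ i, (μ - lam i) * (y i)^2 = 0 := by
      rw [hquad, hnorm, Finset.mul_sum] at heq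
      simp only [sub_mul]
      rw [Finset.sum_sub_distrib]
      linarith [heq]
    have hterm : ∀ i ∈ Finset.univ, (μ - lam i) * (y i)^2 = 0 := by
      rw [← Finset.sum_eq_zero_iff_of_nonneg]
      · exact hsum
      · intro i _
        exact mul_nonneg (by linarith [hmax i]) (sq_nonneg _)
    have hDy : Matrix.diagonal lam *ᵥ y = μ • y := by
      ext i
      rw [Matrix.mulVec_diagonal]
      rcases mul_eq_zero.mp (hterm i (Finset.mem_univ i)) with h | h
      · have : lam i = μ := by linarith
        simp [this]
      · have : y i = 0 := sq_eq_zero_iff.mp h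
        simp [this]
    rw [hMz, hDy, Matrix.mulVec_smul, h2]

lemma perron (hk : 1 ≤ k) (M : Matrix (Fin k) (Fin k) ℝ) (hM : M.IsSymm)
    (hnn : ∀ u v, 0 ≤ M u v)
    (hirr : ∀ u v : Fin k, ∃ r : ℕ, 0 < r ∧ 0 < (M ^ r) u v) :
    ∃ μ : ℝ, μ ∈ M.charpoly.roots ∧ (∀ x ∈ M.charpoly.roots, x ≤ μ) ∧
      M.charpoly.roots.count μ = 1 ∧
      ∃ x : Fin k → ℝ, (∀ v, 0 < x v) ∧ M *ᵥ x = μ • x := by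
  classical
  have hH : M.IsHermitian := by
    rwa [Matrix.IsHermitian, conjTranspose_eq_transpose_of_trivial]
  have hne : Nonempty (Fin k) := ⟨⟨0, hk⟩⟩
  have hroots := roots_charpoly_symm' M hH
  obtain ⟨i₀, -, hi₀⟩ := Finset.exists_max_image Finset.univ hH.eigenvalues
    ⟨⟨0, hk⟩, Finset.mem_univ _⟩
  set μ := hH.eigenvalues i₀ with hμ
  have hmax : ∀ i, hH.eigenvalues i ≤ μ := fun i => hi₀ i (Finset.mem_univ i)
  have hmemroots : μ ∈ M.charpoly.roots := by
    rw [hroots]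
    exact Multiset.mem_map.mpr ⟨i₀, Finset.mem_univ_val _, rfl⟩
  have hle : ∀ x ∈ M.charpoly.roots, x ≤ μ := by
    intro x hx
    rw [hroots] at hx
    obtain ⟨i, -, rfl⟩ := Multiset.mem_map.mp hx
    exact hmax i
  -- eigenvector of |·|
  have habs : ∀ x : Fin k → ℝ, M *ᵥ x = μ • x →
      M *ᵥ (fun v => |x v|) = μ • (fun v => |x v|) := by
    intro x hx
    set y : Fin k → ℝ := fun v => |x v| with hy
    have hray := rayleigh_main' M hH μ hmax y
    apply hray.2
    have hxx : x ⬝ᵥ x = y ⬝ᵥ y := by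
      unfold dotProduct
      apply Finset.sum_congr rfl; intro v _
      simp [hy, abs_mul_abs_self]
    have hxq : x ⬝ᵥ (M *ᵥ x) = μ * (x ⬝ᵥ x) := by
      rw [hx, dotProduct_smul]; rfl
    have hform : ∀ w : Fin k → ℝ, w ⬝ᵥ (M *ᵥ w) = ∑ u, ∑ v, M u v * w u * w v := by
      intro w
      simp only [dotProduct, Matrix.mulVec, Finset.mul_sum]
      refine Finset.sum_congr rfl fun u _ => Finset.sum_congr rfl fun v _ => by ring
    have hge : x ⬝ᵥ (M *ᵥ x) ≤ y ⬝ᵥ (M *ᵥ y) := by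
      rw [hform, hform]
      refine Finset.sum_le_sum fun u _ => Finset.sum_le_sum fun v _ => ?_
      calc M u v * x u * x v ≤ |M u v * x u * x v| := le_abs_self _
        _ = M u v * y u * y v := by
            rw [abs_mul, abs_mul, abs_of_nonneg (hnn u v)]
    have hlequad := (rayleigh_main' M hH μ hmax y).1
    have hmm : μ * (x ⬝ᵥ x) = μ * (y ⬝ᵥ y) := by rw [hxx]
    linarith
  -- positivity
  have hpos : ∀ y : Fin k → ℝ, M *ᵥ y = μ • y → (∀ v, 0 ≤ y v) → y ≠ 0 → ∀ v, 0 < y v := by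
    intro y hy hynn hyne v
    obtain ⟨u₀, hu₀⟩ : ∃ u, y u ≠ 0 := Function.ne_iff.mp hyne
    have hu₀pos : 0 < y u₀ := lt_of_le_of_ne (hynn u₀) (Ne.symm hu₀)
    obtain ⟨r, hr, hMr⟩ := hirr v u₀
    have hpow : ∀ s : ℕ, (M ^ s) *ᵥ y = μ ^ s • y := by
      intro s
      induction s with
      | zero => simp
      | succ s ih =>
        rw [pow_succ, ← Matrix.mulVec_mulVec, hy, Matrix.mulVec_smul, ih, smul_smul, pow_succ]
        ring_nf
    have hsum : 0 < ((M ^ r) *ᵥ y) v := by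
      rw [Matrix.mulVec]
      apply Finset.sum_pos' (fun u _ => mul_nonneg (pow_entry_nonneg' M hnn r v u) (hynn u))
        ⟨u₀, Finset.mem_univ _, mul_pos hMr hu₀pos⟩
    rw [hpow r] at hsum
    have hprod : 0 < μ ^ r * y v := hsum
    have hyv : y v ≠ 0 := by
      intro h0
      rw [h0, mul_zero] at hprod
      exact lt_irrefl 0 hprod
    exact lt_of_le_of_ne (hynn v) (Ne.symm hyv)
  -- absolute value of an eigenvector is nonzero
  have habsne : ∀ z : Fin k → ℝ, z ≠ 0 → (fun v => |z v|) ≠ 0 := by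
    intro z hz h
    apply hz
    funext v
    have := congrFun h v
    simpa [abs_eq_zero] using this
  -- eigenvectors of μ have no zero entries
  have hnozero : ∀ z : Fin k → ℝ, M *ᵥ z = μ • z → z ≠ 0 → ∀ v, z v ≠ 0 := by
    intro z hz hzne v
    have hp := hpos (fun w => |z w|) (habs z hz) (fun w => abs_nonneg _) (habsne z hzne) v
    intro h0
    rw [h0] at hp
    simp at hp
  -- the Perron eigenvector
  have hb0 := hH.mulVec_eigenvectorBasis i₀
  set b : Fin k → ℝ := ⇑(hH.eigenvectorBasis i₀) with hb
  have hbne : b ≠ 0 := by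
    intro h
    exact hH.eigenvectorBasis.orthonormal.ne_zero i₀ (by ext v; exact congrFun h v)
  have hx0eig : M *ᵥ (fun v => |b v|) = μ • (fun v => |b v|) := habs b hb0
  have hx0pos : ∀ v, 0 < |b v| :=
    hpos _ hx0eig (fun v => abs_nonneg _) (habsne b hbne)
  -- multiplicity one
  have hcount : M.charpoly.roots.count μ = 1 := by
    rw [hroots, Multiset.count_map]
    have hfv : Multiset.filter (fun i => μ = hH.eigenvalues i) Finset.univ.val
        = (Finset.filter (fun i => μ = hH.eigenvalues i) Finset.univ).val :=
      (Finset.filter_val _ _).symm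
    rw [hfv]
    have : Finset.filter (fun i => μ = hH.eigenvalues i) Finset.univ = {i₀} := by
      rw [Finset.eq_singleton_iff_unique_mem]
      refine ⟨Finset.mem_filter.mpr ⟨Finset.mem_univ _, rfl⟩, ?_⟩
      intro j hj
      have hje : μ = hH.eigenvalues j := (Finset.mem_filter.mp hj).2
      by_contra hji
      -- two orthogonal eigenvectors of μ
      set bj : Fin k → ℝ := ⇑(hH.eigenvectorBasis j) with hbj
      have hbjeig : M *ᵥ bj = μ • bj := by
        rw [hH.mulVec_eigenvectorBasis j, ← hje]
      have hbjne : bj ≠ 0 := by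
        intro h
        exact hH.eigenvectorBasis.orthonormal.ne_zero j (by ext v; exact congrFun h v)
      set v0 : Fin k := ⟨0, hk⟩ with hv0
      set z : Fin k → ℝ := fun v => bj v0 * b v - b v0 * bj v with hz
      have hzeig : M *ᵥ z = μ • z := by
        have hzdef : z = (bj v0) • b - (b v0) • bj := by
          funext v; simp [hz, Pi.smul_apply, smul_eq_mul]
        rw [hzdef, Matrix.mulVec_sub, Matrix.mulVec_smul, Matrix.mulVec_smul, hb0, hbjeig]
        funext v
        simp [Pi.smul_apply, smul_eq_mul]
        ring
      have hzv0 : z v0 = 0 := by simp [hz]; ring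
      have hzzero : z = 0 := by
        by_contra hzne
        exact hnozero z hzeig hzne v0 hzv0
      -- contradiction with orthonormality
      have horm := hH.eigenvectorBasis.orthonormal
      have hinner : (inner ℝ (hH.eigenvectorBasis i₀) (hH.eigenvectorBasis j) : ℝ) = 0 :=
        horm.2 (fun h => hji (h.symm ▸ rfl) : i₀ ≠ j)
      have hinner1 : (inner ℝ (hH.eigenvectorBasis i₀) (hH.eigenvectorBasis i₀) : ℝ) = 1 := by
        rw [real_inner_self_eq_norm_sq, horm.1 i₀, one_pow]
      have hips : ∀ w : Fin k, (inner ℝ (hH.eigenvectorBasis i₀) (hH.eigenvectorBasis w) : ℝ)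
          = ∑ v, b v * ⇑(hH.eigenvectorBasis w) v := by
        intro w
        rw [PiLp.inner_apply]
        refine Finset.sum_congr rfl fun v _ => ?_
        simp [hb, mul_comm]
      have hsum0 : ∑ v, b v * bj v = 0 := by rw [← hips j, hinner]
      have hsum1 : ∑ v, b v * b v = 1 := by rw [← hips i₀, hinner1]
      have hpt : ∀ v, bj v0 * b v = b v0 * bj v := by
        intro v
        have := congrFun hzzero v
        simp only [hz, Pi.zero_apply] at this
        linarith
      have hs : bj v0 * ∑ v, b v * b v = b v0 * ∑ v, b v * bj v := by
        rw [Finset.mul_sum, Finset.mul_sum]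
        refine Finset.sum_congr rfl fun v _ => ?_
        calc bj v0 * (b v * b v) = (bj v0 * b v) * b v := by ring
          _ = (b v0 * bj v) * b v := by rw [hpt v]
          _ = b v0 * (b v * bj v) := by ring
      rw [hsum0, hsum1, mul_one, mul_zero] at hs
      exact hnozero bj hbjeig hbjne v0 hs
    rw [this]
    rfl
  exact ⟨μ, hmemroots, hle, hcount, _, hx0pos, hx0eig⟩

/-- if `A` is a nonnegative irreducible real symmetric `n × n` matrix, `Q` is a
nonnegative `n × m` matrix (`m ≥ 1`) with `Qᵀ Q = I_m`, nonzero rows, and `A Q = Q B` where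
`B = Qᵀ A Q`, then the largest eigenvalue of `A` equals the largest eigenvalue of `B`, and it
is a simple root of the characteristic polynomial of `A` and of that of `B`. -/
theorem stmt5 {n m : ℕ} (hn : 1 ≤ n) (hm : 1 ≤ m)
    (A : Matrix (Fin n) (Fin n) ℝ) (hA : A.IsSymm)
    (hAnonneg : ∀ u v, 0 ≤ A u v)
    (hirr : ∀ u v : Fin n, ∃ r : ℕ, 0 < r ∧ 0 < (A ^ r) u v)
    (Q : Matrix (Fin n) (Fin m) ℝ) (hQnonneg : ∀ v c, 0 ≤ Q v c)
    (hQ : Qᵀ * Q = 1) (hrows : ∀ v : Fin n, ∃ c : Fin m, Q v c ≠ 0)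
    (hAQ : A * Q = Q * (Qᵀ * A * Q)) :
    ∃ μ : ℝ,
      μ ∈ A.charpoly.roots ∧ (∀ x ∈ A.charpoly.roots, x ≤ μ) ∧
      μ ∈ (Qᵀ * A * Q).charpoly.roots ∧ (∀ x ∈ (Qᵀ * A * Q).charpoly.roots, x ≤ μ) ∧
      A.charpoly.roots.count μ = 1 ∧ (Qᵀ * A * Q).charpoly.roots.count μ = 1 := by
  classical
  set B : Matrix (Fin m) (Fin m) ℝ := Qᵀ * A * Q with hB
  have hBsymm : B.IsSymm := by
    show Bᵀ = B
    rw [hB, Matrix.transpose_mul, Matrix.transpose_mul, Matrix.transpose_transpose, hA,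
      Matrix.mul_assoc]
  have hBnn : ∀ c d, 0 ≤ B c d := by
    intro c d
    rw [hB, Matrix.mul_apply]
    refine Finset.sum_nonneg fun v _ => mul_nonneg ?_ (hQnonneg v d)
    rw [Matrix.mul_apply]
    exact Finset.sum_nonneg fun u _ => mul_nonneg (hQnonneg u c) (hAnonneg u v)
  have hpowQ : ∀ r : ℕ, A ^ r * Q = Q * B ^ r := by
    intro r
    induction r with
    | zero => simp
    | succ r ih =>
      calc A ^ (r+1) * Q = A ^ r * (A * Q) := by rw [pow_succ, Matrix.mul_assoc]
        _ = A ^ r * (Q * B) := by rw [hAQ]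
        _ = (A ^ r * Q) * B := by rw [Matrix.mul_assoc]
        _ = Q * B ^ r * B := by rw [ih]
        _ = Q * B ^ (r+1) := by rw [Matrix.mul_assoc, ← pow_succ]
  have hBpow : ∀ r : ℕ, B ^ r = Qᵀ * A ^ r * Q := by
    intro r
    calc B ^ r = (Qᵀ * Q) * B ^ r := by rw [hQ, one_mul]
      _ = Qᵀ * (Q * B ^ r) := by rw [Matrix.mul_assoc]
      _ = Qᵀ * (A ^ r * Q) := by rw [hpowQ]
      _ = Qᵀ * A ^ r * Q := by rw [Matrix.mul_assoc]
  have hApow_nn : ∀ (r : ℕ) u v, 0 ≤ (A ^ r) u v := by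
    intro r
    induction r with
    | zero => intro u v; by_cases h : u = v <;> simp [pow_zero, Matrix.one_apply, h]
    | succ r ih =>
      intro u v
      rw [pow_succ, Matrix.mul_apply]
      exact Finset.sum_nonneg fun w _ => mul_nonneg (ih u w) (hAnonneg w v)
  have hcols : ∀ c, ∃ v, 0 < Q v c := by
    intro c
    by_contra h
    push_neg at h
    have h1 : (Qᵀ * Q) c c = (1 : ℝ) := by rw [hQ]; simp [Matrix.one_apply]
    rw [Matrix.mul_apply] at h1
    rw [Finset.sum_eq_zero (fun v _ => by
      have hz : Q v c = 0 := le_antisymm (h v) (hQnonneg v c)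
      rw [Matrix.transpose_apply, hz, mul_zero])] at h1
    norm_num at h1
  have hBirr : ∀ c d : Fin m, ∃ r : ℕ, 0 < r ∧ 0 < (B ^ r) c d := by
    intro c d
    obtain ⟨u₀, hu₀⟩ := hcols c
    obtain ⟨v₀, hv₀⟩ := hcols d
    obtain ⟨r, hr, hAr⟩ := hirr u₀ v₀
    refine ⟨r, hr, ?_⟩
    rw [hBpow r, Matrix.mul_apply]
    refine Finset.sum_pos' (fun v _ => mul_nonneg ?_ (hQnonneg v d))
      ⟨v₀, Finset.mem_univ _, mul_pos ?_ hv₀⟩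
    · rw [Matrix.mul_apply]
      exact Finset.sum_nonneg fun u _ =>
        mul_nonneg (hQnonneg u c) (hApow_nn r u v)
    · rw [Matrix.mul_apply]
      exact Finset.sum_pos' (fun u _ => mul_nonneg (hQnonneg u c) (hApow_nn r u v₀))
        ⟨u₀, Finset.mem_univ _, mul_pos hu₀ hAr⟩
  obtain ⟨μ, hμmem, hμle, hμcount, x, hxpos, hxeig⟩ := perron hn A hA hAnonneg hirr
  obtain ⟨ν, hνmem, hνle, hνcount, w, hwpos, hweig⟩ := perron hm B hBsymm hBnn hBirr
  -- ν ≤ μ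
  have hQw : A *ᵥ (Q *ᵥ w) = ν • (Q *ᵥ w) := by
    rw [Matrix.mulVec_mulVec, hAQ, ← Matrix.mulVec_mulVec, hweig, Matrix.mulVec_smul]
  have hQwne : Q *ᵥ w ≠ 0 := by
    intro h
    have h2 : (Qᵀ * Q) *ᵥ w = 0 := by
      rw [← Matrix.mulVec_mulVec, h, Matrix.mulVec_zero]
    rw [hQ, Matrix.one_mulVec] at h2
    have := hwpos ⟨0, hm⟩
    rw [h2] at this
    simp at this
  have hνμ : ν ≤ μ := hμle ν (root_of_eigenvector' A ν _ hQwne hQw)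
  -- μ ≤ ν
  have hAP : A * (Q * Qᵀ) = (Q * Qᵀ) * A := by
    have h1 : A * (Q * Qᵀ) = Q * B * Qᵀ := by
      rw [← Matrix.mul_assoc, hAQ]
    have h2 : (Q * Qᵀ) * A = Q * B * Qᵀ := by
      have h3 := congrArg Matrix.transpose h1
      simp only [Matrix.transpose_mul, Matrix.transpose_transpose, hA.eq, hBsymm.eq,
        Matrix.mul_assoc] at h3
      simp only [Matrix.mul_assoc]
      exact h3
    rw [h1, h2]
  have hBQt : B * Qᵀ = Qᵀ * A := by
    calc B * Qᵀ = Qᵀ * (A * (Q * Qᵀ)) := by rw [hB]; simp only [Matrix.mul_assoc]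
      _ = Qᵀ * ((Q * Qᵀ) * A) := by rw [hAP]
      _ = (Qᵀ * Q) * (Qᵀ * A) := by simp only [Matrix.mul_assoc]
      _ = Qᵀ * A := by rw [hQ, Matrix.one_mul]
  have hBz : B *ᵥ (Qᵀ *ᵥ x) = μ • (Qᵀ *ᵥ x) := by
    rw [Matrix.mulVec_mulVec, hBQt, ← Matrix.mulVec_mulVec, hxeig, Matrix.mulVec_smul]
  have hzne : Qᵀ *ᵥ x ≠ 0 := by
    obtain ⟨c, hc⟩ := hrows ⟨0, hn⟩
    have hcpos : 0 < Q ⟨0, hn⟩ c := lt_of_le_of_ne (hQnonneg _ c) (Ne.symm hc)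
    have hcomp : 0 < (Qᵀ *ᵥ x) c := by
      have hceq : (Qᵀ *ᵥ x) c = ∑ v, Q v c * x v := by
        simp [Matrix.mulVec, dotProduct, Matrix.transpose_apply]
      rw [hceq]
      exact Finset.sum_pos' (fun v _ => mul_nonneg (hQnonneg v c) (le_of_lt (hxpos v)))
        ⟨⟨0, hn⟩, Finset.mem_univ _, mul_pos hcpos (hxpos _)⟩
    intro h
    rw [h] at hcomp
    simp at hcomp
  have hμν : μ ≤ ν := hνle μ (root_of_eigenvector' B μ _ hzne hBz)
  have hνμeq : ν = μ := le_antisymm hνμ hμν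
  subst hνμeq
  exact ⟨ν, hμmem, hμle, hνmem, hνle, hμcount, hνcount⟩
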